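/- Let J₀ be the network Jacobian with all d_i = 0 (entries J₀_{iu} = n_{iu} if (i,u) ∈ E, J₀_{iu} = p_{ui} if (u,i) ∈ E, J₀_{iu} = 0 for other i ≠ u, and J₀_{uu} = −Σ_{k:(k,u)∈E} n_{ku} − Σ_{j:(u,j)∈E} p_{uj}). Then J₀ has no nonzero purely imaginary eigenvalue: every root λ ∈ ℂ of the characteristic polynomial of J₀ with Re(λ) = 0 satisfies λ = 0. (This is Step 2 in the paper's proof of Lemma 5.) -/

import Mathlib

/-- A *network Jacobian*: a finite directed acyclic graph on `Fin N`
(no self-loops, at most one direction per pair, connected underlying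
undirected graph), positive reals `p i j`, `n i j` on each edge `(i,j) ∈ E`
(modeling `∂g_{ij}/∂q_i > 0` and `−∂g_{ij}/∂q_j > 0`), and nonnegative
departure derivatives `d i` at each vertex. -/
structure NetworkJacobian (N : ℕ) where
  E : Finset (Fin N × Fin N)
  no_self_loops : ∀ e ∈ E, e.1 ≠ e.2
  antisymm : ∀ i u : Fin N, (i, u) ∈ E → (u, i) ∉ E
  acyclic : ∃ rank : Fin N → ℕ, ∀ e ∈ E, rank e.1 < rank e.2
  connected : (SimpleGraph.fromRel fun i u => (i, u) ∈ E).Connected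
  p : Fin N → Fin N → ℝ
  n : Fin N → Fin N → ℝ
  d : Fin N → ℝ
  p_pos : ∀ e ∈ E, 0 < p e.1 e.2
  n_pos : ∀ e ∈ E, 0 < n e.1 e.2
  d_nonneg : ∀ i, 0 ≤ d i

/-- The matrix `J` associated to a network Jacobian:
`J i u = n i u` if `(i,u) ∈ E`, `J i u = p u i` if `(u,i) ∈ E`, `J i u = 0`
for other `i ≠ u`, and
`J u u = −Σ_{k:(k,u)∈E} n k u − Σ_{j:(u,j)∈E} p u j − d u`. -/
noncomputable def NetworkJacobian.J {N : ℕ} (G : NetworkJacobian N) :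
    Matrix (Fin N) (Fin N) ℝ := fun i u =>
  if i = u then
    -(∑ k ∈ Finset.univ.filter fun k => (k, u) ∈ G.E, G.n k u)
      - (∑ j ∈ Finset.univ.filter fun j => (u, j) ∈ G.E, G.p u j) - G.d u
  else if (i, u) ∈ G.E then G.n i u
  else if (u, i) ∈ G.E then G.p u i
  else 0


open Matrix Polynomial Finset in
theorem gersh_col {N : ℕ} (A : Matrix (Fin N) (Fin N) ℝ) (z : ℂ)
    (hz : (A.map (fun x : ℝ => (x : ℂ))).charpoly.IsRoot z) :
    ∃ k : Fin N, ‖z - (A k k : ℂ)‖ ≤ ∑ j ∈ Finset.univ.erase k, ‖(A j k : ℂ)‖ := by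
  classical
  set M := A.map (fun x : ℝ => (x : ℂ)) with hM
  have hdet : (Matrix.scalar (Fin N) z - M).det = 0 := by
    rwa [Matrix.charpoly, Polynomial.IsRoot, _root_.eval_det, matPolyEquiv_charmatrix,
      eval_sub, eval_C, eval_X] at hz
  have hdetT : (Matrix.scalar (Fin N) z - Mᵀ).det = 0 := by
    rw [← Matrix.det_transpose]
    convert hdet using 2
    simp [Matrix.transpose_sub, Matrix.scalar, Matrix.transpose_smul]
  obtain ⟨v, hv0, hv⟩ := (Matrix.exists_mulVec_eq_zero_iff).mpr hdetT
  have hev : Mᵀ.mulVec v = z • v := by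
    have := hv
    rw [Matrix.sub_mulVec] at this
    have h1 : (Matrix.scalar (Fin N) z).mulVec v = z • v := by
      ext i
      simp [Matrix.mulVec_diagonal, Algebra.algebraMap_eq_smul_one, Pi.smul_apply, smul_eq_mul]
    rw [h1, sub_eq_zero] at this
    exact this.symm
  have heig : Module.End.HasEigenvalue (Matrix.toLin' Mᵀ) z :=
    Module.End.hasEigenvalue_of_hasEigenvector
      ⟨Module.End.mem_eigenspace_iff.mpr (by simpa [Matrix.toLin'_apply] using hev), hv0⟩
  obtain ⟨k, hk⟩ := eigenvalue_mem_ball heig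
  refine ⟨k, ?_⟩
  rw [Metric.mem_closedBall] at hk
  simpa [Matrix.transpose_apply, hM, Complex.dist_eq, Matrix.map_apply] using hk


/-- **Step 2 of the proof of Lemma 5.** The matrix `J₀ = J + diag(d)`
(the network Jacobian with all `d i` set to `0`) has no nonzero purely
imaginary eigenvalue: every complex root `z` of its characteristic
polynomial with `Re z = 0` satisfies `z = 0`. -/
theorem stmt11 {N : ℕ} (G : NetworkJacobian N) :
    ∀ z : ℂ,
      ((G.J + Matrix.diagonal G.d).map (fun x : ℝ => (x : ℂ))).charpoly.IsRoot z →
      z.re = 0 → z = 0 := by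
  classical
  intro z hz hre
  set A : Matrix (Fin N) (Fin N) ℝ := G.J + Matrix.diagonal G.d with hA
  obtain ⟨k, hk⟩ := gersh_col A z hz
  -- the diagonal entry
  set Sn : ℝ := ∑ j ∈ Finset.univ.filter fun j => (j, k) ∈ G.E, G.n j k with hSn
  set Sp : ℝ := ∑ j ∈ Finset.univ.filter fun j => (k, j) ∈ G.E, G.p k j with hSp
  have hdiag : A k k = -Sn - Sp := by
    simp only [hA, NetworkJacobian.J, Matrix.add_apply, Matrix.diagonal_apply_eq,
      if_true, eq_self_iff_true, hSn, hSp]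
    ring_nf
  -- the off-diagonal column sum
  set f : Fin N → ℝ := fun j =>
    if (j, k) ∈ G.E then G.n j k else if (k, j) ∈ G.E then G.p k j else 0 with hf
  have hfnonneg : ∀ j, 0 ≤ f j := by
    intro j
    simp only [hf]
    split_ifs with h1 h2
    · exact (G.n_pos _ h1).le
    · exact (G.p_pos _ h2).le
    · exact le_refl 0
  have hoff : ∀ j, j ≠ k → A j k = f j := by
    intro j hjk
    simp [hA, NetworkJacobian.J, Matrix.add_apply, Matrix.diagonal_apply_ne _ hjk, hf, hjk]
  have hsum_univ : ∑ j, f j = Sn + Sp := by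
    rw [hf]
    rw [Finset.sum_ite, Finset.sum_ite]
    have h2 : (Finset.univ.filter fun j => ¬(j, k) ∈ G.E).filter (fun j => (k, j) ∈ G.E)
        = Finset.univ.filter fun j => (k, j) ∈ G.E := by
      ext j
      simp only [Finset.mem_filter, Finset.mem_univ, true_and]
      exact ⟨fun h => h.2, fun h => ⟨G.antisymm k j h, h⟩⟩
    rw [h2]
    simp [hSn, hSp]
  have hcol : ∑ j ∈ Finset.univ.erase k, ‖((A j k : ℝ) : ℂ)‖ ≤ Sn + Sp := by
    have e1 : ∀ j ∈ Finset.univ.erase k, ‖((A j k : ℝ) : ℂ)‖ = f j := by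
      intro j hj
      have hjk : j ≠ k := Finset.ne_of_mem_erase hj
      rw [hoff j hjk, Complex.norm_real, Real.norm_of_nonneg (hfnonneg j)]
    rw [Finset.sum_congr rfl e1]
    calc ∑ j ∈ Finset.univ.erase k, f j ≤ ∑ j, f j :=
          Finset.sum_le_sum_of_subset_of_nonneg (Finset.subset_univ _)
            (fun j _ _ => hfnonneg j)
      _ = Sn + Sp := hsum_univ
  -- final numeric step
  have hkk : ‖z - ((A k k : ℝ) : ℂ)‖ ≤ Sn + Sp := le_trans hk hcol
  have hS : 0 ≤ Sn + Sp := le_trans (norm_nonneg _) hkk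
  have hnsq : ‖z - ((A k k : ℝ) : ℂ)‖^2 ≤ (Sn + Sp)^2 := by
    exact pow_le_pow_left₀ (norm_nonneg _) hkk 2
  have him : z.im = 0 := by
    have h1 : ‖z - ((A k k : ℝ) : ℂ)‖^2 = (z.re - A k k)^2 + z.im^2 := by
      rw [Complex.sq_norm, Complex.normSq_apply]
      simp [Complex.sub_re, Complex.sub_im]
      ring
    rw [h1, hdiag, hre] at hnsq
    nlinarith
  exact Complex.ext hre him
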